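/- Suppose R = ℂ and that Hom(Γ, ℂ) = 0, i.e. every group homomorphism from Γ to the additive group of ℂ is trivial. Then J_q = I for every q ≥ 1, and consequently H_q^p(Γ,Σ,V) ≅ H^p(Γ,V) for every ℂ[Γ]-module V, every p ≥ 0 and every q ≥ 1. -/

import Mathlib

open CategoryTheory

noncomputable section

variable (R : Type) [CommRing R] (Γ : Type) [Group Γ]

/-- The augmentation map of the group algebra `A = R[Γ]`, sending each `γ ∈ Γ` to `1`. -/
def aug : MonoidAlgebra R Γ →ₐ[R] R := MonoidAlgebra.lift R R Γ 1

/-- The augmentation ideal `I = ker(aug) ⊆ A`. -/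
def Iaug : Ideal (MonoidAlgebra R Γ) := RingHom.ker (aug R Γ).toRingHom

/-- `I` as an `R`-submodule of `A` (so that the powers `I^q` make sense). -/
def IaugR : Submodule R (MonoidAlgebra R Γ) := Submodule.restrictScalars R (Iaug R Γ)

/-- The augmentation ideal of `R[Σ]` viewed inside `A`: the `R`-span of `σ - 1`, `σ ∈ Σ`. -/
def ISig (Sg : Subgroup Γ) : Submodule R (MonoidAlgebra R Γ) :=
  Submodule.span R {x | ∃ σ ∈ Sg, x = MonoidAlgebra.of R Γ σ - 1}

/-- The left ideal `A·I_Σ` generated by `I_Σ`. -/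
def AISig (Sg : Subgroup Γ) : Ideal (MonoidAlgebra R Γ) :=
  Ideal.span (ISig R Γ Sg : Set (MonoidAlgebra R Γ))

/-- `J_q = I^q + A·I_Σ`. -/
def J (Sg : Subgroup Γ) (q : ℕ) : Ideal (MonoidAlgebra R Γ) :=
  Ideal.span ((IaugR R Γ ^ q : Submodule R (MonoidAlgebra R Γ)) : Set (MonoidAlgebra R Γ))
    ⊔ AISig R Γ Sg

/-- `Ext_A^p(X, V)` as an abelian group (`ℤ`-module). -/
abbrev ExtG (p : ℕ) (X V : ModuleCat (MonoidAlgebra R Γ)) : Type :=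
  ((Ext ℤ (ModuleCat (MonoidAlgebra R Γ)) p).obj (Opposite.op X)).obj V

/-- Ordinary group cohomology `H^p(Γ, V) = Ext_A^p(R, V)`, `R = A/I` the trivial module. -/
abbrev Hp (p : ℕ) (V : ModuleCat (MonoidAlgebra R Γ)) : Type :=
  ExtG R Γ p (ModuleCat.of _ (MonoidAlgebra R Γ ⧸ Iaug R Γ)) V

/-- Higher order cohomology `H_q^p(Γ,Σ,V) = Ext_A^p(A/J_q, V)`. -/
abbrev Hqp (Sg : Subgroup Γ) (q p : ℕ) (V : ModuleCat (MonoidAlgebra R Γ)) : Type :=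
  ExtG R Γ p (ModuleCat.of _ (MonoidAlgebra R Γ ⧸ J R Γ Sg q)) V

/-- The `A`-module `J_q / J_{q+1}`. -/
abbrev Jmod (Sg : Subgroup Γ) (q : ℕ) :=
  ↥(J R Γ Sg q) ⧸ (Submodule.comap (J R Γ Sg q).subtype (J R Γ Sg (q+1)))



section Aux

variable (Γ : Type) [Group Γ]

lemma aug_single (γ : Γ) (c : ℂ) : aug ℂ Γ (MonoidAlgebra.single γ c) = c := by
  simp [aug, MonoidAlgebra.lift_single]

lemma aug_of (γ : Γ) : aug ℂ Γ (MonoidAlgebra.of ℂ Γ γ) = 1 := by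
  rw [MonoidAlgebra.of_apply, aug_single]

lemma of_sub_one_mem (γ : Γ) : MonoidAlgebra.of ℂ Γ γ - 1 ∈ Iaug ℂ Γ := by
  simp [Iaug, RingHom.mem_ker, map_sub, MonoidAlgebra.of_apply, aug_single]

lemma sub_aug_smul_mem_span (x : MonoidAlgebra ℂ Γ) :
    x - aug ℂ Γ x • (1 : MonoidAlgebra ℂ Γ) ∈
      Submodule.span ℂ {y : MonoidAlgebra ℂ Γ | ∃ γ : Γ, y = MonoidAlgebra.of ℂ Γ γ - 1} := by
  induction x using MonoidAlgebra.induction_on with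
  | of γ =>
      have hmem : MonoidAlgebra.of ℂ Γ γ - 1 ∈
          Submodule.span ℂ {y : MonoidAlgebra ℂ Γ | ∃ γ : Γ, y = MonoidAlgebra.of ℂ Γ γ - 1} :=
        Submodule.subset_span ⟨γ, rfl⟩
      simpa [MonoidAlgebra.of_apply, aug_single] using hmem
  | add f g hf hg =>
      have := Submodule.add_mem _ hf hg
      convert this using 1
      rw [map_add, add_smul]
      abel
  | smul r f hf =>
      have := Submodule.smul_mem _ r hf
      convert this using 1
      rw [map_smul, smul_sub, smul_smul, smul_eq_mul]

lemma Iaug_le_span :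
    IaugR ℂ Γ ≤
      Submodule.span ℂ {y : MonoidAlgebra ℂ Γ | ∃ γ : Γ, y = MonoidAlgebra.of ℂ Γ γ - 1} := by
  intro x hx
  have hx0 : aug ℂ Γ x = 0 := hx
  have := sub_aug_smul_mem_span Γ x
  rwa [hx0, zero_smul, sub_zero] at this

lemma of_sub_one_mem_sq
    (h : ∀ φ : Γ →* Multiplicative ℂ, ∀ γ : Γ, φ γ = 1) (γ : Γ) :
    MonoidAlgebra.of ℂ Γ γ - 1 ∈ IaugR ℂ Γ * IaugR ℂ Γ := by
  set N : Submodule ℂ (MonoidAlgebra ℂ Γ) := IaugR ℂ Γ * IaugR ℂ Γ with hN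
  have hadd : ∀ γ δ : Γ,
      N.mkQ (MonoidAlgebra.of ℂ Γ (γ * δ) - 1) =
        N.mkQ (MonoidAlgebra.of ℂ Γ γ - 1) + N.mkQ (MonoidAlgebra.of ℂ Γ δ - 1) := by
    intro γ δ
    have hm : (MonoidAlgebra.of ℂ Γ γ - 1) * (MonoidAlgebra.of ℂ Γ δ - 1) ∈ N :=
      Submodule.mul_mem_mul (of_sub_one_mem Γ γ) (of_sub_one_mem Γ δ)
    have key : (MonoidAlgebra.of ℂ Γ (γ * δ) - 1) -
        ((MonoidAlgebra.of ℂ Γ γ - 1) + (MonoidAlgebra.of ℂ Γ δ - 1)) =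
        (MonoidAlgebra.of ℂ Γ γ - 1) * (MonoidAlgebra.of ℂ Γ δ - 1) := by
      rw [map_mul]
      noncomm_ring
    rw [← sub_eq_zero, ← map_add, ← map_sub, key]
    exact (Submodule.Quotient.mk_eq_zero N).mpr hm
  have hzero : N.mkQ (MonoidAlgebra.of ℂ Γ γ - 1) = 0 := by
    rw [← Module.forall_dual_apply_eq_zero_iff ℂ]
    intro ψ
    let φ : Γ →* Multiplicative ℂ :=
      MonoidHom.mk' (fun γ => Multiplicative.ofAdd (ψ (N.mkQ (MonoidAlgebra.of ℂ Γ γ - 1))))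
        (by
          intro a b
          simp only [hadd, map_add]
          rfl)
    have := h φ γ
    simpa [φ] using congrArg Multiplicative.toAdd this
  exact (Submodule.Quotient.mk_eq_zero N).mp hzero

lemma Iaug_le_sq (h : ∀ φ : Γ →* Multiplicative ℂ, ∀ γ : Γ, φ γ = 1) :
    IaugR ℂ Γ ≤ IaugR ℂ Γ * IaugR ℂ Γ :=
  le_trans (Iaug_le_span Γ)
    (Submodule.span_le.mpr (by rintro y ⟨γ, rfl⟩; exact of_sub_one_mem_sq Γ h γ))

lemma sq_eq (h : ∀ φ : Γ →* Multiplicative ℂ, ∀ γ : Γ, φ γ = 1) :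
    IaugR ℂ Γ * IaugR ℂ Γ = IaugR ℂ Γ := by
  refine le_antisymm (Submodule.mul_le.mpr ?_) (Iaug_le_sq Γ h)
  intro x hx y hy
  exact Ideal.mul_mem_left _ x hy

lemma pow_eq (h : ∀ φ : Γ →* Multiplicative ℂ, ∀ γ : Γ, φ γ = 1) :
    ∀ q : ℕ, 1 ≤ q → IaugR ℂ Γ ^ q = IaugR ℂ Γ := by
  intro q hq
  induction q with
  | zero => omega
  | succ n ih =>
      rcases Nat.eq_or_lt_of_le hq with h1 | h1
      · rw [← h1, pow_one]
      · rw [pow_succ, ih (by omega), sq_eq Γ h]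

lemma AISig_le (Sg : Subgroup Γ) : AISig ℂ Γ Sg ≤ Iaug ℂ Γ := by
  apply Ideal.span_le.mpr
  have : ISig ℂ Γ Sg ≤ IaugR ℂ Γ := by
    apply Submodule.span_le.mpr
    rintro y ⟨σ, _, rfl⟩
    exact of_sub_one_mem Γ σ
  exact this

lemma J_eq (h : ∀ φ : Γ →* Multiplicative ℂ, ∀ γ : Γ, φ γ = 1)
    (Sg : Subgroup Γ) (q : ℕ) (hq : 1 ≤ q) : J ℂ Γ Sg q = Iaug ℂ Γ := by
  have hpow := pow_eq Γ h q hq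
  rw [J, hpow]
  refine le_antisymm (sup_le (Ideal.span_le.mpr ?_) (AISig_le Γ Sg)) ?_
  · intro x hx
    exact hx
  · refine le_trans ?_ le_sup_left
    intro x hx
    exact Ideal.subset_span hx

lemma ext_congr {Γ : Type} [Group Γ] (p : ℕ) {X Y V : ModuleCat (MonoidAlgebra ℂ Γ)}
    (hXY : X = Y) : Nonempty (ExtG ℂ Γ p X V ≃ₗ[ℤ] ExtG ℂ Γ p Y V) := by
  subst hXY
  exact ⟨LinearEquiv.refl ℤ _⟩

end Aux

/-- Suppose `R = ℂ` and that `Hom(Γ, ℂ) = 0`, i.e. every group homomorphism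
from `Γ` to the additive group of `ℂ` is trivial. Then `J_q = I` for every `q ≥ 1`, and
consequently `H_q^p(Γ,Σ,V) ≅ H^p(Γ,V)` for every `ℂ[Γ]`-module `V`, every `p ≥ 0` and every
`q ≥ 1`. -/
theorem higher_order_trivial_of_no_characters (Sg : Subgroup Γ) [Sg.Normal]
    (h : ∀ φ : Γ →* Multiplicative ℂ, ∀ γ : Γ, φ γ = 1) :
    ∀ q : ℕ, 1 ≤ q →
      J ℂ Γ Sg q = Iaug ℂ Γ ∧
      ∀ (V : ModuleCat (MonoidAlgebra ℂ Γ)) (p : ℕ),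
        Nonempty ((Hqp ℂ Γ Sg q p V) ≃ₗ[ℤ] (Hp ℂ Γ p V)) := by
  intro q hq
  have hJ : J ℂ Γ Sg q = Iaug ℂ Γ := J_eq Γ h Sg q hq
  refine ⟨hJ, fun V p => ?_⟩
  exact ext_congr p (by rw [hJ])
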